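/- Let x be an affine transformation of ℝ², x·z = θ(x)z + τ(x) with θ(x) ∈ GL(2,ℝ), whose linear part θ(x) has two real eigenvalues x₁, x₂ with |x₁| > |x₂| and x₁, x₂ ≠ 1, with corresponding nonzero non-colinear eigenvectors u₁ (for x₁) and u₂ (for x₂), and let φ(x) ∈ ℝ² be the unique fixed point of x. Then for every z ∈ ℝ² with z ≠ φ(x), ‖x·z − φ(x)‖ / ‖z − φ(x)‖ ≥ d([u₁],[u₂])² · |x₁| · d([z − φ(x)],[u₂]) / (2√2). -/

import Mathlib

open scoped Pointwise
noncomputable section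

/-- Operator norm of a `2×2` real matrix induced by the Euclidean norm on `ℝ²`. -/
def opNorm (A : Matrix (Fin 2) (Fin 2) ℝ) : ℝ :=
  ‖LinearMap.toContinuousLinearMap (Matrix.toEuclideanLin A)‖

/-- The norm `‖Q‖ = sup_{g ∈ Q} ‖g‖` of a set of matrices. -/
def setNorm (Q : Set (Matrix (Fin 2) (Fin 2) ℝ)) : ℝ :=
  sSup (opNorm '' Q)

/-- `lam` is a (complex) eigenvalue of the real matrix `A`. -/
def IsEigenvalue (A : Matrix (Fin 2) (Fin 2) ℝ) (lam : ℂ) : Prop :=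
  ∃ v : Fin 2 → ℂ, v ≠ 0 ∧ (A.map (Complex.ofReal)).mulVec v = lam • v

/-- `Λ(Q)`: the maximal modulus of an eigenvalue of an element of `Q`. -/
def matLambda (Q : Set (Matrix (Fin 2) (Fin 2) ℝ)) : ℝ :=
  sSup {x : ℝ | ∃ q ∈ Q, ∃ lam : ℂ, IsEigenvalue q lam ∧ x = ‖lam‖}

/-- `E(Q)`: the minimal norm of `Q` over all conjugations by elements of `GL(2,ℝ)`. -/
def minNorm (Q : Set (Matrix (Fin 2) (Fin 2) ℝ)) : ℝ :=
  ⨅ g : GL (Fin 2) ℝ, setNorm ((fun s => (g : Matrix (Fin 2) (Fin 2) ℝ) * s * ((g⁻¹ : GL (Fin 2) ℝ) : Matrix (Fin 2) (Fin 2) ℝ)) '' Q)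

/-- The canonical embedding of `SL(2,ℤ)` into the `2×2` real matrices. -/
def toReal (g : Matrix.SpecialLinearGroup (Fin 2) ℤ) : Matrix (Fin 2) (Fin 2) ℝ :=
  (g : Matrix (Fin 2) (Fin 2) ℤ).map (Int.cast : ℤ → ℝ)

/-- The cross product (determinant) of two vectors of `ℝ²`. -/
def cross (u v : Fin 2 → ℝ) : ℝ := u 0 * v 1 - u 1 * v 0

/-- The Euclidean norm on `ℝ²`. -/
def enorm2 (u : Fin 2 → ℝ) : ℝ := Real.sqrt (u 0 ^ 2 + u 1 ^ 2)

/-- Fubini–Study distance between the lines spanned by `u` and `v`. -/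
def pdist (u v : Fin 2 → ℝ) : ℝ := |cross u v| / (enorm2 u * enorm2 v)


lemma enorm2_nonneg (u : Fin 2 → ℝ) : 0 ≤ enorm2 u := Real.sqrt_nonneg _

lemma enorm2_pos {u : Fin 2 → ℝ} (h : u ≠ 0) : 0 < enorm2 u := by
  rw [enorm2, Real.sqrt_pos]
  rcases Function.ne_iff.mp h with ⟨i, hi⟩
  simp only [Pi.zero_apply] at hi
  fin_cases i
  · have h0 : u 0 ≠ 0 := hi
    positivity
  · have h1 : u 1 ≠ 0 := hi
    positivity

lemma cross_abs_le (u v : Fin 2 → ℝ) : |cross u v| ≤ enorm2 u * enorm2 v := by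
  rw [enorm2, enorm2, ← Real.sqrt_mul (by positivity), ← Real.sqrt_sq_eq_abs]
  apply Real.sqrt_le_sqrt
  unfold cross
  nlinarith [sq_nonneg (u 0 * v 0 + u 1 * v 1)]

lemma cross_mulVec_eig (A : Matrix (Fin 2) (Fin 2) ℝ) (x₁ x₂ : ℝ) (u₁ u₂ : Fin 2 → ℝ)
    (he₁ : A.mulVec u₁ = x₁ • u₁) (he₂ : A.mulVec u₂ = x₂ • u₂)
    (hnc : cross u₁ u₂ ≠ 0) (w : Fin 2 → ℝ) :
    cross (A.mulVec w) u₂ = x₁ * cross w u₂ := by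
  have e10 := congrFun he₁ 0
  have e11 := congrFun he₁ 1
  have e20 := congrFun he₂ 0
  have e21 := congrFun he₂ 1
  simp only [Matrix.mulVec, dotProduct, Fin.sum_univ_two, Pi.smul_apply,
    smul_eq_mul] at e10 e11 e20 e21
  have h0 : (cross (A.mulVec w) u₂ - x₁ * cross w u₂) * cross u₁ u₂ = 0 := by
    simp only [cross, Matrix.mulVec, dotProduct, Fin.sum_univ_two]
    linear_combination (w 0 * u₂ 1 - w 1 * u₂ 0) * (u₂ 1 * e10 - u₂ 0 * e11)
      + (u₁ 0 * w 1 - u₁ 1 * w 0) * (u₂ 1 * e20 - u₂ 0 * e21)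
  rcases mul_eq_zero.mp h0 with h | h
  · exact sub_eq_zero.mp h
  · exact absurd h hnc

/-- **Norm dilation for affine maps.** Let `x : z ↦ A z + t` be an affine transformation of
`ℝ²` with invertible linear part having real eigenvalues `x₁, x₂`, `|x₁| > |x₂|`,
`x₁, x₂ ≠ 1`, eigenvectors `u₁, u₂`, and unique fixed point `p`. Then for every `z ≠ p`,
`‖x z − p‖/‖z − p‖ ≥ d([u₁],[u₂])² |x₁| d([z − p],[u₂]) / (2√2)`. -/
theorem affine_norm_dilation
    (A : Matrix (Fin 2) (Fin 2) ℝ) (t : Fin 2 → ℝ) (hA : IsUnit A.det)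
    (x₁ x₂ : ℝ) (hx : |x₂| < |x₁|) (hx₁ : x₁ ≠ 1) (hx₂ : x₂ ≠ 1)
    (u₁ u₂ : Fin 2 → ℝ) (hu₁ : u₁ ≠ 0) (hu₂ : u₂ ≠ 0)
    (he₁ : A.mulVec u₁ = x₁ • u₁) (he₂ : A.mulVec u₂ = x₂ • u₂)
    (hnc : cross u₁ u₂ ≠ 0)
    (p : Fin 2 → ℝ) (hp : A.mulVec p + t = p) :
    ∀ z : Fin 2 → ℝ, z ≠ p →
      pdist u₁ u₂ ^ 2 * |x₁| * pdist (z - p) u₂ / (2 * Real.sqrt 2) ≤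
        enorm2 (A.mulVec z + t - p) / enorm2 (z - p) := by
  intro z hz
  have hE : A.mulVec z + t - p = A.mulVec (z - p) := by
    rw [Matrix.mulVec_sub]
    linear_combination hp
  rw [hE]
  have hw : z - p ≠ 0 := sub_ne_zero.mpr hz
  have hW : 0 < enorm2 (z - p) := enorm2_pos hw
  have hU : 0 < enorm2 u₂ := enorm2_pos hu₂
  have hU1 : 0 < enorm2 u₁ := enorm2_pos hu₁
  have hkey2 : |x₁| * |cross (z - p) u₂| ≤ enorm2 (A.mulVec (z - p)) * enorm2 u₂ := by
    have := cross_abs_le (A.mulVec (z - p)) u₂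
    rwa [cross_mulVec_eig A x₁ x₂ u₁ u₂ he₁ he₂ hnc (z - p), abs_mul] at this
  have hd0 : 0 ≤ pdist u₁ u₂ := div_nonneg (abs_nonneg _) (by positivity)
  have hd1 : pdist u₁ u₂ ≤ 1 := by
    rw [pdist, div_le_one (by positivity)]
    exact cross_abs_le u₁ u₂
  have hd2 : pdist u₁ u₂ ^ 2 ≤ 1 := by nlinarith
  have hs : (1 : ℝ) ≤ Real.sqrt 2 := by
    nlinarith [Real.sqrt_nonneg 2, Real.sq_sqrt (by norm_num : (0:ℝ) ≤ 2)]
  set d := pdist u₁ u₂ with hd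
  have heq : d ^ 2 * |x₁| * pdist (z - p) u₂ / (2 * Real.sqrt 2)
      = d ^ 2 * (|x₁| * |cross (z - p) u₂|) / (enorm2 (z - p) * enorm2 u₂ * (2 * Real.sqrt 2)) := by
    rw [pdist]; ring
  rw [heq, div_le_div_iff₀ (by positivity) hW]
  have hN : 0 ≤ enorm2 (A.mulVec (z - p)) := enorm2_nonneg _
  have hKW : 0 ≤ |x₁| * |cross (z - p) u₂| * enorm2 (z - p) := by positivity
  have h1 : |x₁| * |cross (z - p) u₂| * enorm2 (z - p)
      ≤ enorm2 (A.mulVec (z - p)) * enorm2 u₂ * enorm2 (z - p) :=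
    mul_le_mul_of_nonneg_right hkey2 hW.le
  have h2 : d ^ 2 * (|x₁| * |cross (z - p) u₂| * enorm2 (z - p))
      ≤ 1 * (|x₁| * |cross (z - p) u₂| * enorm2 (z - p)) :=
    mul_le_mul_of_nonneg_right hd2 hKW
  have hNUW : 0 ≤ enorm2 (A.mulVec (z - p)) * enorm2 u₂ * enorm2 (z - p) := by positivity
  have h3 : enorm2 (A.mulVec (z - p)) * enorm2 u₂ * enorm2 (z - p) * 1
      ≤ enorm2 (A.mulVec (z - p)) * enorm2 u₂ * enorm2 (z - p) * (2 * Real.sqrt 2) :=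
    mul_le_mul_of_nonneg_left (by linarith) hNUW
  nlinarith [h1, h2, h3]
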